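/- Let δ > 0, let U be a standard normal random variable, and set Y = U · exp((δ/2) U²). Then for every real p > 0: E[|Y|^p] < ∞ if p δ < 1, and E[|Y|^p] = ∞ if p δ ≥ 1. In particular, the Lambert W transformed Gaussian random variable Y has an unbounded p-th moment for all p ≥ 1/δ. -/

import Mathlib

open MeasureTheory ProbabilityTheory Real
open scoped ENNReal

lemma integrable_abs_rpow_mul_exp_neg_mul_sq {b : ℝ} (hb : 0 < b) {p : ℝ} (hp : 0 < p) :
    Integrable fun x : ℝ => |x| ^ p * Real.exp (-b * x ^ 2) := by
  rw [← integrableOn_univ, ← Set.Iio_union_Ici (a := (0 : ℝ)), integrableOn_union,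
    integrableOn_Ici_iff_integrableOn_Ioi]
  have hpos : IntegrableOn (fun x : ℝ => |x| ^ p * Real.exp (-b * x ^ 2)) (Set.Ioi 0) := by
    refine (integrableOn_rpow_mul_exp_neg_mul_sq hb (by linarith : (-1 : ℝ) < p)).congr_fun
      ?_ measurableSet_Ioi
    intro x hx
    simp only [abs_of_pos (show (0:ℝ) < x from hx)]
  refine ⟨?_, hpos⟩
  rw [← (Measure.measurePreserving_neg (volume : Measure ℝ)).integrableOn_comp_preimage
      (Homeomorph.neg ℝ).measurableEmbedding]
  simpa [Function.comp_def] using hpos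

/-- **Heavy tails of the Lambert W transformed Gaussian.**
Let `δ > 0`, let `U` be standard normal and `Y = U ⬝ exp((δ/2) U²)`. Then for every real
`p > 0`: `E[|Y|^p] < ∞` if `p δ < 1`, and `E[|Y|^p] = ∞` if `p δ ≥ 1`. -/
theorem lambertW_gaussian_moments (δ : ℝ) (hδ : 0 < δ) (p : ℝ) (hp : 0 < p) :
    (p * δ < 1 →
      ∫⁻ x, ENNReal.ofReal (|x * Real.exp (δ / 2 * x ^ 2)| ^ p) ∂(gaussianReal 0 1) < ⊤) ∧
    (1 ≤ p * δ →
      ∫⁻ x, ENNReal.ofReal (|x * Real.exp (δ / 2 * x ^ 2)| ^ p) ∂(gaussianReal 0 1) = ⊤) := by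
  have hmf : Measurable fun x : ℝ => ENNReal.ofReal (|x * Real.exp (δ / 2 * x ^ 2)| ^ p) := by
    fun_prop
  have hrw : ∫⁻ x, ENNReal.ofReal (|x * Real.exp (δ / 2 * x ^ 2)| ^ p) ∂(gaussianReal 0 1)
      = ∫⁻ x, ENNReal.ofReal
        ((√(2 * π))⁻¹ * (|x| ^ p * Real.exp (-((1 - p * δ) / 2) * x ^ 2))) := by
    rw [gaussianReal_of_var_ne_zero 0 one_ne_zero,
      lintegral_withDensity_eq_lintegral_mul _ (measurable_gaussianPDF 0 1) hmf]
    refine lintegral_congr fun x => ?_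
    have hkey : gaussianPDFReal 0 1 x * |x * Real.exp (δ / 2 * x ^ 2)| ^ p
        = (√(2 * π))⁻¹ * (|x| ^ p * Real.exp (-((1 - p * δ) / 2) * x ^ 2)) := by
      rw [gaussianPDFReal]
      rw [abs_mul, abs_of_pos (Real.exp_pos _),
        Real.mul_rpow (abs_nonneg x) (Real.exp_pos _).le,
        Real.rpow_def_of_pos (Real.exp_pos _), Real.log_exp]
      push_cast
      rw [mul_one, mul_one, sub_zero]
      have he : rexp (-x ^ 2 / 2) * rexp (δ / 2 * x ^ 2 * p)
          = rexp (-((1 - p * δ) / 2) * x ^ 2) := by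
        rw [← Real.exp_add]; congr 1; ring
      linear_combination (√(2 * π))⁻¹ * |x| ^ p * he
    simp only [Pi.mul_apply, gaussianPDF]
    rw [← ENNReal.ofReal_mul (gaussianPDFReal_nonneg 0 1 x), hkey]
  constructor
  · intro h1
    rw [hrw]
    have hb : 0 < (1 - p * δ) / 2 := by linarith
    exact (((integrable_abs_rpow_mul_exp_neg_mul_sq hb hp).const_mul
      (√(2 * π))⁻¹)).lintegral_lt_top
  · intro h1
    rw [hrw, eq_top_iff]
    have hc : (0 : ℝ) < (√(2 * π))⁻¹ := by positivity
    calc (⊤ : ℝ≥0∞) = ∫⁻ x, (Set.Ioi (1 : ℝ)).indicator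
          (fun _ => ENNReal.ofReal (√(2 * π))⁻¹) x := by
          rw [lintegral_indicator measurableSet_Ioi, setLIntegral_const]
          rw [Real.volume_Ioi]
          rw [ENNReal.mul_top (ENNReal.ofReal_pos.2 hc).ne']
      _ ≤ _ := by
          refine lintegral_mono fun x => ?_
          by_cases hx : x ∈ Set.Ioi (1 : ℝ)
          · rw [Set.indicator_of_mem hx]
            refine ENNReal.ofReal_le_ofReal ?_
            have hx1 : (1 : ℝ) < x := hx
            have h2 : (1 : ℝ) ≤ |x| ^ p :=
              Real.one_le_rpow (by rw [abs_of_pos (by linarith)]; linarith) hp.le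
            have h3 : (1 : ℝ) ≤ Real.exp (-((1 - p * δ) / 2) * x ^ 2) := by
              apply Real.one_le_exp
              nlinarith [sq_nonneg x]
            have h4 : (1 : ℝ) ≤ |x| ^ p * Real.exp (-((1 - p * δ) / 2) * x ^ 2) := by
              nlinarith
            nlinarith
          · rw [Set.indicator_of_notMem hx]
            exact zero_le
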